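/- Let T be a tetragonal graph with boundary cycle ∂T and |V(T)| = 2m, and let u, v be two distinct vertices of T with dist_{∂T}(u, v) = d. Then for every integer ℓ with d ≤ ℓ ≤ 2m − d and ℓ ≡ d (mod 2), there exists a path in T from u to v of length ℓ. -/

import Mathlib

open SimpleGraph

namespace Dean

variable {V : Type*}

noncomputable def degN (G : SimpleGraph V) (v : V) : ℕ := (G.neighborSet v).ncard

def HasCycleMod (G : SimpleGraph V) (k : ℕ) (r : ℤ) : Prop :=
  ∃ (v : V) (c : G.Walk v v), c.IsCycle ∧ (k : ℤ) ∣ ((c.length : ℤ) - r)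

def HasConsecutiveCycles (G : SimpleGraph V) (k : ℕ) : Prop :=
  ∃ a : ℕ, ∀ i < k, ∃ (v : V) (c : G.Walk v v), c.IsCycle ∧ c.length = a + i

def HasAdmissibleCycles (G : SimpleGraph V) (k : ℕ) : Prop :=
  ∃ a d : ℕ, (d = 1 ∨ d = 2) ∧
    ∀ i < k, ∃ (v : V) (c : G.Walk v v), c.IsCycle ∧ c.length = a + d * i

/-- `HGraph k n t` : complete bipartite `K_{k,n}` minus `k - t` edges at the vertex
`Sum.inr 0` of the part of size `n`, so that this vertex keeps exactly `t` neighbours. -/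
def HGraph (k n t : ℕ) : SimpleGraph (Fin k ⊕ Fin n) :=
  SimpleGraph.fromRel fun x y =>
    ∃ (i : Fin k) (j : Fin n), x = Sum.inl i ∧ y = Sum.inr j ∧ (j.val ≠ 0 ∨ i.val < t)

def IsKkplus1 (k : ℕ) (G : SimpleGraph V) : Prop :=
  Nonempty (G ≃g completeGraph (Fin (k + 1)))

def IsKkk (k : ℕ) (G : SimpleGraph V) : Prop :=
  Nonempty (G ≃g completeBipartiteGraph (Fin k) (Fin k))

def IsHGraph (k : ℕ) (G : SimpleGraph V) : Prop :=
  ∃ n t, 2 ≤ t ∧ t ≤ k ∧ k < n ∧ Nonempty (G ≃g HGraph k n t)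

def IsExceptional (k : ℕ) (G : SimpleGraph V) : Prop :=
  IsKkplus1 k G ∨ IsKkk k G ∨ IsHGraph k G

def IsBipExceptional (k : ℕ) (G : SimpleGraph V) : Prop :=
  IsKkk k G ∨ IsHGraph k G

def IsCutVertex (G : SimpleGraph V) (v : V) : Prop :=
  ∃ (a b : V) (ha : a ≠ v) (hb : b ≠ v), G.Reachable a b ∧
    ¬ (G.induce {u : V | u ≠ v}).Reachable ⟨a, ha⟩ ⟨b, hb⟩

def NoCutVtxIn (G : SimpleGraph V) (B : Set V) : Prop :=
  ∀ v ∈ B, B = {v} ∨ (G.induce (B \ {v})).Connected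

def IsBlockSet (G : SimpleGraph V) (B : Set V) : Prop :=
  (G.induce B).Connected ∧ NoCutVtxIn G B ∧
    ∀ B' : Set V, B ⊆ B' → (G.induce B').Connected → NoCutVtxIn G B' → B' = B

def IsEndBlock (G : SimpleGraph V) (B : Set V) : Prop :=
  IsBlockSet G B ∧ {v | v ∈ B ∧ IsCutVertex G v}.Subsingleton

def IsThreeConnected (G : SimpleGraph V) : Prop :=
  4 ≤ Nat.card V ∧ ∀ S : Set V, S.ncard ≤ 2 → (G.induce (Sᶜ : Set V)).Connected

def IsTwoConnected (G : SimpleGraph V) : Prop :=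
  3 ≤ Nat.card V ∧ ∀ v : V, (G.induce ({v}ᶜ : Set V)).Connected

def TypeOne (k : ℕ) (G : SimpleGraph V) : Prop :=
  IsThreeConnected G ∧ {v : V | degN G v < k}.Subsingleton

/-- the graph `G - θ + θ₁θ₂`. -/
def modGraph (G : SimpleGraph V) (θ θ₁ θ₂ : V) (h₁ : θ₁ ≠ θ) (h₂ : θ₂ ≠ θ) :
    SimpleGraph ↥{u : V | u ≠ θ} :=
  (G.induce {u : V | u ≠ θ}) ⊔ SimpleGraph.fromEdgeSet {s(⟨θ₁, h₁⟩, ⟨θ₂, h₂⟩)}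

def TypeTwo (k : ℕ) (G : SimpleGraph V) (θ θ₁ θ₂ : V) : Prop :=
  degN G θ = 2 ∧ (∀ v, degN G v = 2 → v = θ) ∧
  G.Adj θ θ₁ ∧ G.Adj θ θ₂ ∧ θ₁ ≠ θ₂ ∧
  ∃ (h₁ : θ₁ ≠ θ) (h₂ : θ₂ ≠ θ),
    IsThreeConnected (modGraph G θ θ₁ θ₂ h₁ h₂) ∧
    ∀ v, k ≤ degN (modGraph G θ θ₁ θ₂ h₁ h₂) v

def IsKWeak (k : ℕ) (G : SimpleGraph V) : Prop :=
  TypeOne k G ∨ ∃ θ θ₁ θ₂, TypeTwo k G θ θ₁ θ₂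

inductive IsTrigonal : SimpleGraph V → SimpleGraph V → Set V → Prop
  | base (a b c : V) (hab : a ≠ b) (hbc : b ≠ c) (hac : a ≠ c) :
      IsTrigonal (SimpleGraph.fromEdgeSet {s(a, b), s(b, c), s(a, c)})
        (SimpleGraph.fromEdgeSet {s(a, b), s(b, c), s(a, c)}) {a, b, c}
  | extend (T B : SimpleGraph V) (S : Set V) (a b x : V)
      (h : IsTrigonal T B S) (hx : x ∉ S) (hab : B.Adj a b) :
      IsTrigonal (T ⊔ SimpleGraph.fromEdgeSet {s(a, x), s(x, b)})
        (B.deleteEdges {s(a, b)} ⊔ SimpleGraph.fromEdgeSet {s(a, x), s(x, b)})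
        (insert x S)

inductive IsTetragonal : SimpleGraph V → SimpleGraph V → Set V → Prop
  | base (a b c d : V) (hab : a ≠ b) (hac : a ≠ c) (had : a ≠ d)
      (hbc : b ≠ c) (hbd : b ≠ d) (hcd : c ≠ d) :
      IsTetragonal (SimpleGraph.fromEdgeSet {s(a, b), s(b, c), s(c, d), s(d, a)})
        (SimpleGraph.fromEdgeSet {s(a, b), s(b, c), s(c, d), s(d, a)}) {a, b, c, d}
  | extend (T B : SimpleGraph V) (S : Set V) (a b x y : V)
      (h : IsTetragonal T B S) (hx : x ∉ S) (hy : y ∉ S) (hxy : x ≠ y) (hab : B.Adj a b) :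
      IsTetragonal (T ⊔ SimpleGraph.fromEdgeSet {s(a, x), s(x, y), s(y, b)})
        (B.deleteEdges {s(a, b)} ⊔ SimpleGraph.fromEdgeSet {s(a, x), s(x, y), s(y, b)})
        (insert x (insert y S))

def IsTetragonalSubgraph (G T B : SimpleGraph V) (S : Set V) : Prop :=
  IsTetragonal T B S ∧ T ≤ G

def IsOptimalTetragonal (G T B : SimpleGraph V) (S : Set V) : Prop :=
  IsTetragonalSubgraph G T B S ∧
  (∀ (T' B' : SimpleGraph V) (S' : Set V),
    IsTetragonalSubgraph G T' B' S' → S'.ncard ≤ S.ncard) ∧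
  (∀ (T' B' : SimpleGraph V) (S' : Set V),
    IsTetragonalSubgraph G T' B' S' → S'.ncard = S.ncard →
      (G.induce S').edgeSet.ncard ≤ (G.induce S).edgeSet.ncard)


/-- circular distance on a cycle of length `2*n` -/
def cd (n i j : ℕ) : ℕ := min (Nat.dist i j) (2 * n - Nat.dist i j)

lemma cd_comm (n i j : ℕ) : cd n i j = cd n j i := by
  simp [cd, Nat.dist_comm]

structure CyclePres (B : SimpleGraph V) (S : Set V) (n : ℕ) (f : ℕ → V) : Prop where
  hn : 2 ≤ n
  inj : ∀ i < 2*n, ∀ j < 2*n, f i = f j → i = j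
  mem : ∀ i < 2*n, f i ∈ S
  surj : ∀ v ∈ S, ∃ i < 2*n, f i = v
  adj : ∀ x y, B.Adj x y ↔ ∃ i < 2*n,
    (x = f i ∧ y = f ((i+1) % (2*n))) ∨ (y = f i ∧ x = f ((i+1) % (2*n)))

namespace CyclePres

variable {B : SimpleGraph V} {S : Set V} {n : ℕ} {f : ℕ → V}

lemma Npos (hp : CyclePres B S n f) : 0 < 2*n := by have := hp.hn; omega

lemma adj_succ (hp : CyclePres B S n f) (m : ℕ) :
    B.Adj (f (m % (2*n))) (f ((m+1) % (2*n))) := by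
  rw [hp.adj]
  refine ⟨m % (2*n), Nat.mod_lt _ hp.Npos, Or.inl ⟨rfl, ?_⟩⟩
  rw [Nat.mod_add_mod]

lemma arc (hp : CyclePres B S n f) :
    ∀ (k i : ℕ), ∃ w : B.Walk (f (i % (2*n))) (f ((i + k) % (2*n))),
      w.length = k ∧ w.support = (List.range (k+1)).map (fun t => f ((i + t) % (2*n))) := by
  intro k
  induction k with
  | zero =>
    intro i
    exact ⟨Walk.nil, by simp, by simp [List.range_succ]⟩
  | succ k ih =>
    intro i
    obtain ⟨w, hl, hs⟩ := ih i
    refine ⟨w.concat (hp.adj_succ (i+k)), ?_, ?_⟩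
    · rw [Walk.length_concat, hl]
    · rw [Walk.support_concat, hs,
        show List.range (k+1+1) = List.range (k+1) ++ [k+1] from List.range_succ,
        List.map_append]
      simp

lemma arc_path (hp : CyclePres B S n f) (i k : ℕ) (hk : k < 2*n) :
    ∃ w : B.Walk (f (i % (2*n))) (f ((i + k) % (2*n))), w.IsPath ∧ w.length = k := by
  obtain ⟨w, hl, hs⟩ := hp.arc k i
  refine ⟨w, ?_, hl⟩
  rw [Walk.isPath_def, hs]
  refine List.Nodup.map_on ?_ List.nodup_range
  intro t1 h1 t2 h2 heq
  rw [List.mem_range] at h1 h2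
  have e1 : (i + t1) % (2*n) < 2*n := Nat.mod_lt _ hp.Npos
  have e2 : (i + t2) % (2*n) < 2*n := Nat.mod_lt _ hp.Npos
  have h3 := hp.inj _ e1 _ e2 heq
  have h4 : t1 % (2*n) = t2 % (2*n) := Nat.ModEq.add_left_cancel' i h3
  rwa [Nat.mod_eq_of_lt (by omega), Nat.mod_eq_of_lt (by omega)] at h4

lemma extreme (hp : CyclePres B S n f) {i j : ℕ} (hi : i < 2*n) (hj : j < 2*n)
    (hij : i ≠ j) {ℓ : ℕ} (hℓ : ℓ = cd n i j ∨ ℓ = 2*n - cd n i j) :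
    ∃ w : B.Walk (f i) (f j), w.IsPath ∧ w.length = ℓ := by
  have main : ∀ i j : ℕ, i < j → j < 2*n → ∀ ℓ : ℕ, (ℓ = j - i ∨ ℓ = 2*n - (j - i)) →
      ∃ w : B.Walk (f i) (f j), w.IsPath ∧ w.length = ℓ := by
    intro i j hij hj ℓ hℓ
    rcases hℓ with rfl | rfl
    · obtain ⟨w, hw, hlen⟩ := hp.arc_path i (j - i) (by omega)
      have h1 : f (i % (2*n)) = f i := by rw [Nat.mod_eq_of_lt (by omega)]
      have h2 : f ((i + (j - i)) % (2*n)) = f j := by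
        have : i + (j - i) = j := by omega
        rw [this, Nat.mod_eq_of_lt (by omega)]
      exact ⟨w.copy h1 h2, by simpa using hw, by simpa using hlen⟩
    · obtain ⟨w, hw, hlen⟩ := hp.arc_path j (2*n - (j - i)) (by omega)
      have h1 : f (j % (2*n)) = f j := by rw [Nat.mod_eq_of_lt (by omega)]
      have h2 : f ((j + (2*n - (j - i))) % (2*n)) = f i := by
        have : j + (2*n - (j - i)) = 2*n + i := by omega
        rw [this, Nat.add_mod_left, Nat.mod_eq_of_lt (by omega)]
      exact ⟨(w.copy h1 h2).reverse, by simpa using hw, by simpa using hlen⟩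
  rcases lt_or_gt_of_ne hij with h | h
  · exact main i j h hj ℓ (by simp only [cd, Nat.dist] at hℓ; omega)
  · obtain ⟨w, hw, hlen⟩ := main j i h hi ℓ (by simp only [cd, Nat.dist] at hℓ; omega)
    exact ⟨w.reverse, by simpa using hw, by simpa using hlen⟩


lemma walk_bound (hp : CyclePres B S n f) :
    ∀ {u v : V} (w : B.Walk u v) (i j : ℕ), i < 2*n → j < 2*n → u = f i → v = f j →
      ∃ s t : ℤ, s.natAbs ≤ w.length ∧ s % 2 = (w.length : ℤ) % 2 ∧
        s = (j : ℤ) - i + 2*n*t := by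
  intro u v w
  induction w with
  | nil =>
    intro i j hi hj hu hv
    have hij : i = j := hp.inj i hi j hj (hu.symm.trans hv)
    exact ⟨0, 0, by simp, by simp, by rw [hij]; ring⟩
  | @cons u z v h p ih =>
    intro i j hi hj hu hv
    obtain ⟨m, hm, hc⟩ := (hp.adj u z).mp h
    have hsplit : (m+1) % (2*n) = m + 1 ∨ ((m+1) % (2*n) = 0 ∧ m + 1 = 2*n) := by
      rcases Nat.lt_or_ge (m+1) (2*n) with h' | h'
      · exact Or.inl (Nat.mod_eq_of_lt h')
      · have h'' : m + 1 = 2*n := by omega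
        exact Or.inr ⟨by rw [h'', Nat.mod_self], h''⟩
    rcases hc with ⟨h1, h2⟩ | ⟨h1, h2⟩
    · have him : i = m := hp.inj i hi m hm (hu.symm.trans h1)
      obtain ⟨s, t, hs1, hs2, hs3⟩ := ih ((m+1) % (2*n)) j (Nat.mod_lt _ hp.Npos) hj h2 hv
      subst him
      rcases hsplit with he | ⟨he, he2⟩
      · refine ⟨s+1, t, ?_, ?_, ?_⟩
        · simp only [Walk.length_cons]; omega
        · simp only [Walk.length_cons]; push_cast; omega
        · rw [hs3, he]; push_cast; ring
      · refine ⟨s+1, t+1, ?_, ?_, ?_⟩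
        · simp only [Walk.length_cons]; omega
        · simp only [Walk.length_cons]; push_cast; omega
        · have hm' : (i:ℤ) = 2*n - 1 := by omega
          rw [hs3, he, hm']; push_cast; ring
    · have him : i = (m+1) % (2*n) := hp.inj i hi _ (Nat.mod_lt _ hp.Npos) (hu.symm.trans h2)
      obtain ⟨s, t, hs1, hs2, hs3⟩ := ih m j hm hj h1 hv
      rcases hsplit with he | ⟨he, he2⟩
      · refine ⟨s-1, t, ?_, ?_, ?_⟩
        · simp only [Walk.length_cons]; omega
        · simp only [Walk.length_cons]; push_cast; omega
        · rw [hs3, him, he]; push_cast; ring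
      · refine ⟨s-1, t-1, ?_, ?_, ?_⟩
        · simp only [Walk.length_cons]; omega
        · simp only [Walk.length_cons]; push_cast; omega
        · have hm' : (m:ℤ) = 2*n - 1 := by omega
          rw [hs3, him, he, hm']; push_cast; ring

lemma dist_eq (hp : CyclePres B S n f) {i j : ℕ} (hi : i < 2*n) (hj : j < 2*n)
    (hij : i ≠ j) : B.dist (f i) (f j) = cd n i j := by
  obtain ⟨w0, _, hl0⟩ := hp.extreme hi hj hij (Or.inl rfl)
  have hub : B.dist (f i) (f j) ≤ cd n i j := hl0 ▸ SimpleGraph.dist_le w0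
  obtain ⟨p, hple⟩ := (Walk.reachable w0).exists_walk_length_eq_dist
  obtain ⟨s, t, h1, h2, h3⟩ := hp.walk_bound p i j hi hj rfl rfl
  have hlb : cd n i j ≤ p.length := by
    set K : ℤ := 2*(n:ℤ)*t with hK
    have h4 : K = 0 ∨ (2*(n:ℤ)) ≤ K ∨ K ≤ -(2*(n:ℤ)) := by
      rcases lt_trichotomy t 0 with h' | h' | h'
      · have h5 : t ≤ -1 := by omega
        have h6 : (2*(n:ℤ))*t ≤ (2*(n:ℤ))*(-1) :=
          mul_le_mul_of_nonneg_left h5 (by positivity)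
        right; right; rw [hK]; linarith
      · left; rw [hK, h', mul_zero]
      · have h5 : (1:ℤ) ≤ t := by omega
        have h6 : (2*(n:ℤ))*1 ≤ (2*(n:ℤ))*t :=
          mul_le_mul_of_nonneg_left h5 (by positivity)
        right; left; rw [hK]; linarith
    simp only [cd, Nat.dist]
    omega
  omega

lemma parity_eq (hp : CyclePres B S n f) {u v : V} (w : B.Walk u v) (i j : ℕ)
    (hi : i < 2*n) (hj : j < 2*n) (hu : u = f i) (hv : v = f j) :
    w.length % 2 = cd n i j % 2 := by
  obtain ⟨s, t, h1, h2, h3⟩ := hp.walk_bound w i j hi hj hu hv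
  set K : ℤ := 2*(n:ℤ)*t with hK
  have h4 : ∃ K2 : ℤ, K = 2*K2 := ⟨(n:ℤ)*t, by rw [hK]; ring⟩
  obtain ⟨K2, hK2⟩ := h4
  have h3' : s = (j : ℤ) - i + 2*K2 := by rw [h3, hK2]
  simp only [cd, Nat.dist]
  omega

lemma ncard_eq (hp : CyclePres B S n f) : S.ncard = 2*n := by
  letI : DecidableEq V := Classical.decEq V
  have hS : S = ((Finset.range (2*n)).image f : Finset V) := by
    ext v
    simp only [Finset.coe_image, Finset.coe_range, Set.mem_image, Set.mem_Iio]
    constructor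
    · intro hv
      obtain ⟨i, hi, he⟩ := hp.surj v hv
      exact ⟨i, hi, he⟩
    · rintro ⟨i, hi, rfl⟩
      exact hp.mem i hi
  rw [hS, Set.ncard_coe_finset, Finset.card_image_of_injOn, Finset.card_range]
  intro a ha b hb h
  exact hp.inj a (by simpa using ha) b (by simpa using hb) h

end CyclePres

def PathProp (T : SimpleGraph V) (n : ℕ) (f : ℕ → V) : Prop :=
  ∀ i j ℓ : ℕ, i < 2*n → j < 2*n → i ≠ j → cd n i j ≤ ℓ → ℓ ≤ 2*n - cd n i j →
    ℓ % 2 = cd n i j % 2 → ∃ p : T.Walk (f i) (f j), p.IsPath ∧ p.length = ℓ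

lemma pathProp_of_half {T : SimpleGraph V} {n : ℕ} {f : ℕ → V}
    (h : ∀ i j ℓ : ℕ, i < j → j < 2*n → cd n i j ≤ ℓ → ℓ ≤ 2*n - cd n i j →
      ℓ % 2 = cd n i j % 2 → ∃ p : T.Walk (f i) (f j), p.IsPath ∧ p.length = ℓ) :
    PathProp T n f := by
  intro i j ℓ hi hj hij h1 h2 h3
  rcases lt_or_gt_of_ne hij with hlt | hlt
  · exact h i j ℓ hlt hj h1 h2 h3
  · rw [cd_comm] at h1 h2 h3
    obtain ⟨p, hp1, hp2⟩ := h j i ℓ hlt hi h1 h2 h3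
    exact ⟨p.reverse, by simpa using hp1, by simpa using hp2⟩

lemma walk_support_mem {T : SimpleGraph V} {S : Set V}
    (hTS : ∀ u v : V, T.Adj u v → u ∈ S ∧ v ∈ S) :
    ∀ {u v : V} (w : T.Walk u v), u ∈ S → ∀ z ∈ w.support, z ∈ S := by
  intro u v w
  induction w with
  | nil =>
    intro hu z hz
    simp only [Walk.support_nil, List.mem_singleton] at hz
    subst hz; exact hu
  | cons h p ih =>
    intro hu z hz
    rw [Walk.support_cons, List.mem_cons] at hz
    rcases hz with rfl | hz
    · exact hu
    · exact ih (hTS _ _ h).2 z hz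

lemma concat_isPath {T : SimpleGraph V} {u v w : V} {p : T.Walk u v} (hp : p.IsPath)
    (h : T.Adj v w) (hw : w ∉ p.support) : (p.concat h).IsPath := by
  rw [Walk.isPath_def, Walk.support_concat]
  rw [Walk.isPath_def] at hp
  refine List.Nodup.append hp (List.nodup_singleton w) ?_
  intro a ha hb
  simp only [List.mem_singleton] at hb
  subst hb
  exact hw ha

lemma cd_rotate {n : ℕ} (hn : 0 < n) {i j : ℕ} (r : ℕ) (hi : i < 2*n) (hj : j < 2*n) :
    cd n ((i + r) % (2*n)) ((j + r) % (2*n)) = cd n i j := by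
  have hN : 0 < 2*n := by omega
  have e1 : (i + r) % (2*n) = (i + r % (2*n)) % (2*n) := (Nat.add_mod_mod _ _ _).symm
  have e2 : (j + r) % (2*n) = (j + r % (2*n)) % (2*n) := (Nat.add_mod_mod _ _ _).symm
  rw [e1, e2]
  set q := r % (2*n) with hq
  have hqlt : q < 2*n := Nat.mod_lt _ hN
  have c1 : (i + q) % (2*n) = if i + q < 2*n then i + q else i + q - 2*n := by
    split
    · exact Nat.mod_eq_of_lt (by assumption)
    · rw [Nat.mod_eq_sub_mod (by omega), Nat.mod_eq_of_lt (by omega)]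
  have c2 : (j + q) % (2*n) = if j + q < 2*n then j + q else j + q - 2*n := by
    split
    · exact Nat.mod_eq_of_lt (by assumption)
    · rw [Nat.mod_eq_sub_mod (by omega), Nat.mod_eq_of_lt (by omega)]
  rw [c1, c2]
  split <;> split <;> (simp only [cd, Nat.dist]; omega)

lemma mod_cancel {n i j r : ℕ} (hi : i < 2*n) (hj : j < 2*n)
    (h : (i + r) % (2*n) = (j + r) % (2*n)) : i = j := by
  have h2 : i % (2*n) = j % (2*n) := Nat.ModEq.add_right_cancel' r h
  rwa [Nat.mod_eq_of_lt hi, Nat.mod_eq_of_lt hj] at h2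

lemma CyclePres.rotate {B : SimpleGraph V} {S : Set V} {n : ℕ} {f : ℕ → V}
    (hp : CyclePres B S n f) (r : ℕ) :
    CyclePres B S n (fun i => f ((i + r) % (2*n))) := by
  have hN := hp.Npos
  have hsh : ∀ m : ℕ, m < 2*n → ∃ i < 2*n, (i + r) % (2*n) = m := by
    intro m hm
    set q := r % (2*n) with hq
    have hqlt : q < 2*n := Nat.mod_lt _ hN
    refine ⟨if q ≤ m then m - q else m + 2*n - q, by split <;> omega, ?_⟩
    rw [← Nat.add_mod_mod, ← hq]
    split
    · rw [Nat.sub_add_cancel (by assumption), Nat.mod_eq_of_lt hm]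
    · rw [show m + 2*n - q + q = m + 2*n by omega, Nat.add_mod_right, Nat.mod_eq_of_lt hm]
  constructor
  · exact hp.hn
  · intro i hi j hj h
    exact mod_cancel hi hj (hp.inj _ (Nat.mod_lt _ hN) _ (Nat.mod_lt _ hN) h)
  · intro i _; exact hp.mem _ (Nat.mod_lt _ hN)
  · intro v hv
    obtain ⟨m, hm, he⟩ := hp.surj v hv
    obtain ⟨i, hilt, hie⟩ := hsh m hm
    refine ⟨i, hilt, ?_⟩
    show f ((i + r) % (2*n)) = v
    rw [hie]; exact he
  · intro u v
    rw [hp.adj]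
    have key2 : ∀ i : ℕ, ((i+1) % (2*n) + r) % (2*n) = ((i + r) % (2*n) + 1) % (2*n) := by
      intro i
      rw [Nat.mod_add_mod, Nat.mod_add_mod, Nat.add_right_comm]
    constructor
    · rintro ⟨m, hm, hc⟩
      obtain ⟨i, hilt, hie⟩ := hsh m hm
      refine ⟨i, hilt, ?_⟩
      have key2' : ((i + r) % (2*n) + 1) % (2*n) = (m+1) % (2*n) := by rw [hie]
      rcases hc with ⟨h1, h2⟩ | ⟨h1, h2⟩
      · refine Or.inl ⟨?_, ?_⟩
        · show u = f ((i + r) % (2*n)); rw [hie]; exact h1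
        · show v = f (((i + 1) % (2*n) + r) % (2*n)); rw [key2 i, key2']; exact h2
      · refine Or.inr ⟨?_, ?_⟩
        · show v = f ((i + r) % (2*n)); rw [hie]; exact h1
        · show u = f (((i + 1) % (2*n) + r) % (2*n)); rw [key2 i, key2']; exact h2
    · rintro ⟨i, hilt, hc⟩
      refine ⟨(i + r) % (2*n), Nat.mod_lt _ hN, ?_⟩
      rcases hc with ⟨h1, h2⟩ | ⟨h1, h2⟩
      · exact Or.inl ⟨h1, by rw [← key2 i]; exact h2⟩
      · exact Or.inr ⟨h1, by rw [← key2 i]; exact h2⟩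

lemma PathProp.rotate {T : SimpleGraph V} {n : ℕ} {f : ℕ → V}
    (hpp : PathProp T n f) (hn : 0 < n) (r : ℕ) :
    PathProp T n (fun i => f ((i + r) % (2*n))) := by
  intro i j ℓ hi hj hij h1 h2 h3
  have hN : 0 < 2*n := by omega
  have e := cd_rotate hn r hi hj
  have hne : (i + r) % (2*n) ≠ (j + r) % (2*n) := fun h => hij (mod_cancel hi hj h)
  obtain ⟨p, a, b⟩ := hpp _ _ ℓ (Nat.mod_lt _ hN) (Nat.mod_lt _ hN) hne
    (by rw [e]; exact h1) (by rw [e]; exact h2) (by rw [e]; exact h3)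
  exact ⟨p, a, b⟩

lemma extend_package {T B : SimpleGraph V} {S : Set V} {n : ℕ} {f : ℕ → V}
    (hp : CyclePres B S n f) (hTS : ∀ u v : V, T.Adj u v → u ∈ S ∧ v ∈ S)
    (hBT : B ≤ T) (hpp : PathProp T n f) {x y : V}
    (hx : x ∉ S) (hy : y ∉ S) (hxy : x ≠ y) :
    ∃ g : ℕ → V,
      CyclePres (B.deleteEdges {s(f (2*n-1), f 0)} ⊔
        fromEdgeSet {s(f (2*n-1), x), s(x, y), s(y, f 0)}) (insert x (insert y S)) (n+1) g ∧
      (∀ u v : V, (T ⊔ fromEdgeSet {s(f (2*n-1), x), s(x, y), s(y, f 0)}).Adj u v →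
        u ∈ insert x (insert y S) ∧ v ∈ insert x (insert y S)) ∧
      (B.deleteEdges {s(f (2*n-1), f 0)} ⊔
        fromEdgeSet {s(f (2*n-1), x), s(x, y), s(y, f 0)} ≤
        T ⊔ fromEdgeSet {s(f (2*n-1), x), s(x, y), s(y, f 0)}) ∧
      PathProp (T ⊔ fromEdgeSet {s(f (2*n-1), x), s(x, y), s(y, f 0)}) (n+1) g := by
  have hn2 : 2 ≤ n := hp.hn
  set a := f (2*n-1) with haDef
  set b := f 0 with hbDef
  set T' := T ⊔ fromEdgeSet {s(a, x), s(x, y), s(y, b)} with hT'Def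
  set B' := B.deleteEdges {s(a, b)} ⊔ fromEdgeSet {s(a, x), s(x, y), s(y, b)} with hB'Def
  set S' := insert x (insert y S) with hS'Def
  set g : ℕ → V := fun j => if j = 2*n then x else if j = 2*n+1 then y else f j with hgDef
  have hg_old : ∀ i, i < 2*n → g i = f i := by
    intro i hi
    show (if i = 2*n then x else if i = 2*n+1 then y else f i) = f i
    rw [if_neg (by omega), if_neg (by omega)]
  have hgx : g (2*n) = x := by show (if 2*n = 2*n then _ else _) = x; rw [if_pos rfl]
  have hgy : g (2*n+1) = y := by
    show (if 2*n+1 = 2*n then _ else _) = y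
    rw [if_neg (by omega), if_pos rfl]
  have ha : a ∈ S := hp.mem _ (by omega)
  have hb : b ∈ S := hp.mem _ (by omega)
  have hax : a ≠ x := fun h => hx (h ▸ ha)
  have hay : a ≠ y := fun h => hy (h ▸ ha)
  have hbx : b ≠ x := fun h => hx (h ▸ hb)
  have hby : b ≠ y := fun h => hy (h ▸ hb)
  have habne : a ≠ b := by
    intro h
    have := hp.inj _ (by omega) _ (by omega) h
    omega
  have hSS' : S ⊆ S' := fun z hz => by simp [hS'Def, hz]
  -- T' adjacencies
  have hTax : T'.Adj a x := by
    rw [hT'Def, sup_adj, fromEdgeSet_adj]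
    exact Or.inr ⟨by simp, hax⟩
  have hTxy : T'.Adj x y := by
    rw [hT'Def, sup_adj, fromEdgeSet_adj]
    exact Or.inr ⟨by simp, hxy⟩
  have hTyb : T'.Adj y b := by
    rw [hT'Def, sup_adj, fromEdgeSet_adj]
    exact Or.inr ⟨by simp, fun h => hby h.symm⟩
  have hTle : T ≤ T' := le_sup_left
  have lift : ∀ {u v : V} (p : T.Walk u v), ∃ q : T'.Walk u v,
      q.support = p.support ∧ q.length = p.length ∧ (p.IsPath → q.IsPath) := by
    intro u v p
    refine ⟨p.transfer T' (fun e he => edgeSet_mono hTle (p.edges_subset_edgeSet he)),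
      Walk.support_transfer _ _, Walk.length_transfer _ _, fun h => h.transfer _⟩
  -- the new cycle presentation
  have hp' : CyclePres B' S' (n+1) g := by
    constructor
    · omega
    · intro i hi j hj h
      have ci : i < 2*n ∨ i = 2*n ∨ i = 2*n+1 := by omega
      have cj : j < 2*n ∨ j = 2*n ∨ j = 2*n+1 := by omega
      rcases ci with hi' | rfl | rfl <;> rcases cj with hj' | rfl | rfl
      · rw [hg_old i hi', hg_old j hj'] at h
        exact hp.inj i hi' j hj' h
      · rw [hg_old i hi', hgx] at h
        exact absurd (h ▸ hp.mem i hi') hx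
      · rw [hg_old i hi', hgy] at h
        exact absurd (h ▸ hp.mem i hi') hy
      · rw [hgx, hg_old j hj'] at h
        exact absurd (h.symm ▸ hp.mem j hj') hx
      · rfl
      · rw [hgx, hgy] at h
        exact absurd h hxy
      · rw [hgy, hg_old j hj'] at h
        exact absurd (h.symm ▸ hp.mem j hj') hy
      · rw [hgy, hgx] at h
        exact absurd h.symm hxy
      · rfl
    · intro i hi
      have ci : i < 2*n ∨ i = 2*n ∨ i = 2*n+1 := by omega
      rcases ci with hi' | rfl | rfl
      · rw [hg_old i hi']
        exact hSS' (hp.mem i hi')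
      · rw [hgx]; exact Set.mem_insert _ _
      · rw [hgy]; exact Set.mem_insert_of_mem _ (Set.mem_insert _ _)
    · intro v hv
      rcases Set.mem_insert_iff.mp hv with rfl | hv
      · exact ⟨2*n, by omega, hgx⟩
      rcases Set.mem_insert_iff.mp hv with rfl | hv
      · exact ⟨2*n+1, by omega, hgy⟩
      · obtain ⟨i, hi, he⟩ := hp.surj v hv
        exact ⟨i, by omega, by rw [hg_old i hi]; exact he⟩
    · intro u v
      constructor
      · intro h
        rw [hB'Def, sup_adj, deleteEdges_adj, fromEdgeSet_adj] at h
        rcases h with ⟨hB, hnotab⟩ | ⟨hmem, hne⟩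
        · obtain ⟨m, hm, hc⟩ := (hp.adj u v).mp hB
          have hm' : m < 2*n - 1 := by
            rcases Nat.lt_or_ge m (2*n-1) with h' | h'
            · exact h'
            · exfalso
              have hmeq : m = 2*n - 1 := by omega
              have : (m+1) % (2*n) = 0 := by
                rw [hmeq, show 2*n-1+1 = 2*n by omega, Nat.mod_self]
              rw [this, hmeq] at hc
              rcases hc with ⟨h1, h2⟩ | ⟨h1, h2⟩
              · exact hnotab (by rw [h1, h2]; rfl)
              · exact hnotab (by rw [h1, h2, Sym2.eq_swap]; rfl)
          have hmod : (m+1) % (2*n) = m+1 := Nat.mod_eq_of_lt (by omega)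
          rw [hmod] at hc
          refine ⟨m, by omega, ?_⟩
          have e1 : g m = f m := hg_old m (by omega)
          have e2 : g ((m+1) % (2*(n+1))) = f (m+1) := by
            rw [Nat.mod_eq_of_lt (by omega)]
            exact hg_old (m+1) (by omega)
          rw [e1, e2]
          exact hc
        · simp only [Set.mem_insert_iff, Set.mem_singleton_iff, Sym2.eq_iff] at hmem
          rcases hmem with (⟨rfl, rfl⟩ | ⟨rfl, rfl⟩) | (⟨rfl, rfl⟩ | ⟨rfl, rfl⟩) | (⟨rfl, rfl⟩ | ⟨rfl, rfl⟩)
          · refine ⟨2*n-1, by omega, Or.inl ⟨(hg_old _ (by omega)).symm, ?_⟩⟩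
            rw [show (2*n-1+1) % (2*(n+1)) = 2*n by rw [Nat.mod_eq_of_lt (by omega)]; omega, hgx]
          · refine ⟨2*n-1, by omega, Or.inr ⟨(hg_old _ (by omega)).symm, ?_⟩⟩
            rw [show (2*n-1+1) % (2*(n+1)) = 2*n by rw [Nat.mod_eq_of_lt (by omega)]; omega, hgx]
          · refine ⟨2*n, by omega, Or.inl ⟨hgx.symm, ?_⟩⟩
            rw [show (2*n+1) % (2*(n+1)) = 2*n+1 from Nat.mod_eq_of_lt (by omega), hgy]
          · refine ⟨2*n, by omega, Or.inr ⟨hgx.symm, ?_⟩⟩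
            rw [show (2*n+1) % (2*(n+1)) = 2*n+1 from Nat.mod_eq_of_lt (by omega), hgy]
          · refine ⟨2*n+1, by omega, Or.inl ⟨hgy.symm, ?_⟩⟩
            rw [show (2*n+1+1) % (2*(n+1)) = 0 by rw [show 2*n+1+1 = 2*(n+1) by omega, Nat.mod_self]]
            exact (hg_old 0 (by omega)).symm ▸ rfl
          · refine ⟨2*n+1, by omega, Or.inr ⟨hgy.symm, ?_⟩⟩
            rw [show (2*n+1+1) % (2*(n+1)) = 0 by rw [show 2*n+1+1 = 2*(n+1) by omega, Nat.mod_self]]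
            exact (hg_old 0 (by omega)).symm ▸ rfl
      · rintro ⟨i, hi, hc⟩
        rw [hB'Def, sup_adj, deleteEdges_adj, fromEdgeSet_adj]
        have ci : i < 2*n - 1 ∨ i = 2*n-1 ∨ i = 2*n ∨ i = 2*n+1 := by omega
        rcases ci with hi' | rfl | rfl | rfl
        · have e1 : g i = f i := hg_old i (by omega)
          have e2 : g ((i+1) % (2*(n+1))) = f (i+1) := by
            rw [Nat.mod_eq_of_lt (by omega)]
            exact hg_old (i+1) (by omega)
          rw [e1, e2] at hc
          have hBadj : B.Adj u v := by
            rw [hp.adj]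
            refine ⟨i, by omega, ?_⟩
            rw [Nat.mod_eq_of_lt (by omega)]
            exact hc
          left
          refine ⟨hBadj, ?_⟩
          simp only [Set.mem_singleton_iff, Sym2.eq_iff]
          rintro ((⟨h1, h2⟩ | ⟨h1, h2⟩) : _ ∨ _)
          · rcases hc with ⟨e3, e4⟩ | ⟨e3, e4⟩
            · have := hp.inj i (by omega) (2*n-1) (by omega) ((e3.symm.trans h1))
              omega
            · have := hp.inj i (by omega) 0 (by omega) ((e3.symm.trans h2))
              have := hp.inj (i+1) (by omega) (2*n-1) (by omega) ((e4.symm.trans h1))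
              omega
          · rcases hc with ⟨e3, e4⟩ | ⟨e3, e4⟩
            · have := hp.inj i (by omega) 0 (by omega) ((e3.symm.trans h1))
              have := hp.inj (i+1) (by omega) (2*n-1) (by omega) ((e4.symm.trans h2))
              omega
            · have := hp.inj i (by omega) (2*n-1) (by omega) ((e3.symm.trans h2))
              omega
        · have e1 : g (2*n-1) = a := hg_old _ (by omega)
          have e2 : g ((2*n-1+1) % (2*(n+1))) = x := by
            rw [show (2*n-1+1) % (2*(n+1)) = 2*n by rw [Nat.mod_eq_of_lt (by omega)]; omega, hgx]
          rw [e1, e2] at hc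
          right
          rcases hc with ⟨rfl, rfl⟩ | ⟨rfl, rfl⟩
          · exact ⟨by simp, hax⟩
          · exact ⟨by simp, fun h => hax h.symm⟩
        · have e2 : g ((2*n+1) % (2*(n+1))) = y := by
            rw [Nat.mod_eq_of_lt (by omega), hgy]
          rw [hgx, e2] at hc
          right
          rcases hc with ⟨rfl, rfl⟩ | ⟨rfl, rfl⟩
          · exact ⟨by simp, hxy⟩
          · exact ⟨by simp, fun h => hxy h.symm⟩
        · have e2 : g ((2*n+1+1) % (2*(n+1))) = b := by
            rw [show (2*n+1+1) % (2*(n+1)) = 0 by rw [show 2*n+1+1 = 2*(n+1) by omega, Nat.mod_self]]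
            exact hg_old 0 (by omega)
          rw [hgy, e2] at hc
          right
          rcases hc with ⟨rfl, rfl⟩ | ⟨rfl, rfl⟩
          · exact ⟨by simp, fun h => hby h.symm⟩
          · exact ⟨by simp, hby⟩
  have hTS' : ∀ u v : V, T'.Adj u v → u ∈ S' ∧ v ∈ S' := by
    intro u v h
    rw [hT'Def, sup_adj, fromEdgeSet_adj] at h
    rcases h with h | ⟨hmem, hne⟩
    · exact ⟨hSS' (hTS u v h).1, hSS' (hTS u v h).2⟩
    · simp only [Set.mem_insert_iff, Set.mem_singleton_iff, Sym2.eq_iff] at hmem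
      have hxS' : x ∈ S' := Set.mem_insert _ _
      have hyS' : y ∈ S' := Set.mem_insert_of_mem _ (Set.mem_insert _ _)
      rcases hmem with (⟨rfl, rfl⟩ | ⟨rfl, rfl⟩) | (⟨rfl, rfl⟩ | ⟨rfl, rfl⟩) | (⟨rfl, rfl⟩ | ⟨rfl, rfl⟩) <;>
        exact ⟨by first | exact hxS' | exact hyS' | exact hSS' ha | exact hSS' hb,
               by first | exact hxS' | exact hyS' | exact hSS' ha | exact hSS' hb⟩
  have hB'T' : B' ≤ T' := by
    rw [hB'Def, hT'Def]
    exact sup_le_sup ((deleteEdges_le _).trans hBT) le_rfl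
  refine ⟨g, hp', hTS', hB'T', ?_⟩
  -- the path property
  apply pathProp_of_half
  intro i j ℓ hij hj h1 h2 h3
  have hi : i < 2*(n+1) := lt_trans hij hj
  have hine : i ≠ j := Nat.ne_of_lt hij
  have liftB' : ∀ {u v : V} (w : B'.Walk u v), ∃ q : T'.Walk u v,
      q.length = w.length ∧ (w.IsPath → q.IsPath) := by
    intro u v w
    exact ⟨w.transfer T' (fun e he => edgeSet_mono hB'T' (w.edges_subset_edgeSet he)),
      Walk.length_transfer _ _, fun h => h.transfer _⟩
  have hsupS : ∀ {u v : V} (p : T.Walk u v), u ∈ S → ∀ z ∈ p.support, z ∈ S :=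
    fun p hu => walk_support_mem hTS p hu
  rcases (by omega : j < 2*n ∨ j = 2*n ∨ j = 2*n+1) with hjold | rfl | rfl
  · -- both endpoints old
    by_cases hup : ℓ ≤ 2*n - cd n i j
    · obtain ⟨p, hp1, hp2⟩ := hpp i j ℓ (by omega) (by omega) hine
        (by simp only [cd, Nat.dist] at h1 ⊢; omega) hup
        (by simp only [cd, Nat.dist] at h3 ⊢; omega)
      obtain ⟨q, _, hq2, hq3⟩ := lift p
      exact ⟨q.copy (hg_old i (by omega)).symm (hg_old j (by omega)).symm,
        by simpa using hq3 hp1, by simp [hq2, hp2]⟩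
    · have hℓeq : ℓ = 2*(n+1) - cd (n+1) i j := by
        simp only [cd, Nat.dist] at h1 h2 h3 hup ⊢
        omega
      obtain ⟨w, hw1, hw2⟩ := hp'.extreme (show i < 2*(n+1) by omega) hj hine (Or.inr hℓeq)
      obtain ⟨q, hq1, hq2⟩ := liftB' w
      exact ⟨q, hq2 hw1, by rw [hq1, hw2]⟩
  · -- v = x
    rcases (by omega : i = 2*n-1 ∨ (i < 2*n ∧ i ≠ 2*n-1)) with rfl | ⟨hilt, hine'⟩
    · -- u = a
      have hc' : cd (n+1) (2*n-1) (2*n) = 1 := by simp only [cd, Nat.dist]; omega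
      rw [hc'] at h1 h2 h3
      rcases (by omega : ℓ = 1 ∨ 3 ≤ ℓ) with rfl | hℓ3
      · have hadj : T'.Adj (g (2*n-1)) (g (2*n)) := by
          rw [hg_old _ (by omega), hgx]; exact hTax
        have hne' : g (2*n-1) ≠ g (2*n) := by
          rw [hg_old _ (by omega), hgx]; exact hax
        exact ⟨Walk.cons hadj Walk.nil, Walk.IsPath.nil.cons (by simp [hne']), by simp⟩
      · obtain ⟨p, hp1, hp2⟩ := hpp (2*n-1) 0 (ℓ-2) (by omega) (by omega) (by omega)
          (by simp only [cd, Nat.dist]; omega) (by simp only [cd, Nat.dist]; omega)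
          (by simp only [cd, Nat.dist]; omega)
        obtain ⟨q, hq1, hq2, hq3⟩ := lift p
        have hqS : ∀ z ∈ q.support, z ∈ S := by
          rw [hq1]; exact hsupS p ha
        have hyq : y ∉ q.support := fun h => hy (hqS y h)
        have hq1path : (q.concat hTyb.symm).IsPath := concat_isPath (hq3 hp1) hTyb.symm hyq
        have hxq1 : x ∉ (q.concat hTyb.symm).support := by
          rw [Walk.support_concat, List.mem_append]
          rintro (h | h)
          · exact hx (hqS x h)
          · simp only [List.mem_singleton] at h
            exact hxy h
        have hq2path : ((q.concat hTyb.symm).concat hTxy.symm).IsPath :=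
          concat_isPath hq1path hTxy.symm hxq1
        refine ⟨((q.concat hTyb.symm).concat hTxy.symm).copy
          (hg_old _ (by omega)).symm hgx.symm, by simpa using hq2path, ?_⟩
        simp only [Walk.length_copy, Walk.length_concat, hq2, hp2]
        omega
    · -- general i, append a-x
      obtain ⟨p, hp1, hp2⟩ := hpp i (2*n-1) (ℓ-1) (by omega) (by omega) (by omega)
        (by simp only [cd, Nat.dist] at h1 h2 h3 ⊢; omega)
        (by simp only [cd, Nat.dist] at h1 h2 h3 ⊢; omega)
        (by simp only [cd, Nat.dist] at h1 h2 h3 ⊢; omega)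
      obtain ⟨q, hq1, hq2, hq3⟩ := lift p
      have hqS : ∀ z ∈ q.support, z ∈ S := by
        rw [hq1]; exact hsupS p (hp.mem i (by omega))
      have hxq : x ∉ q.support := fun h => hx (hqS x h)
      have hq1path : (q.concat hTax).IsPath := concat_isPath (hq3 hp1) hTax hxq
      refine ⟨(q.concat hTax).copy (hg_old i (by omega)).symm hgx.symm,
        by simpa using hq1path, ?_⟩
      simp only [Walk.length_copy, Walk.length_concat, hq2, hp2]
      have : 1 ≤ ℓ := by simp only [cd, Nat.dist] at h1; omega
      omega
  · -- v = y
    rcases (by omega : i = 2*n ∨ i = 0 ∨ (0 < i ∧ i < 2*n)) with rfl | rfl | ⟨hipos, hilt⟩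
    · -- u = x, v = y
      have hc' : cd (n+1) (2*n) (2*n+1) = 1 := by simp only [cd, Nat.dist]; omega
      rw [hc'] at h1 h2 h3
      rcases (by omega : ℓ = 1 ∨ 3 ≤ ℓ) with rfl | hℓ3
      · have hadj : T'.Adj (g (2*n)) (g (2*n+1)) := by rw [hgx, hgy]; exact hTxy
        have hne' : g (2*n) ≠ g (2*n+1) := by rw [hgx, hgy]; exact hxy
        exact ⟨Walk.cons hadj Walk.nil, Walk.IsPath.nil.cons (by simp [hne']), by simp⟩
      · obtain ⟨p, hp1, hp2⟩ := hpp (2*n-1) 0 (ℓ-2) (by omega) (by omega) (by omega)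
          (by simp only [cd, Nat.dist]; omega) (by simp only [cd, Nat.dist]; omega)
          (by simp only [cd, Nat.dist]; omega)
        obtain ⟨q, hq1, hq2, hq3⟩ := lift p
        have hqS : ∀ z ∈ q.support, z ∈ S := by
          rw [hq1]; exact hsupS p ha
        have hxq : x ∉ q.support := fun h => hx (hqS x h)
        have hq1path : (Walk.cons hTax.symm q).IsPath := by
          rw [Walk.cons_isPath_iff]
          exact ⟨hq3 hp1, hxq⟩
        have hyq1 : y ∉ (Walk.cons hTax.symm q).support := by
          rw [Walk.support_cons, List.mem_cons]
          rintro (h | h)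
          · exact hxy h.symm
          · exact hy (hqS y h)
        have hq2path : ((Walk.cons hTax.symm q).concat hTyb.symm).IsPath :=
          concat_isPath hq1path hTyb.symm hyq1
        refine ⟨((Walk.cons hTax.symm q).concat hTyb.symm).copy hgx.symm hgy.symm,
          by simpa using hq2path, ?_⟩
        simp only [Walk.length_copy, Walk.length_concat, Walk.length_cons, hq2, hp2]
        omega
    · -- u = b, v = y
      have hc' : cd (n+1) 0 (2*n+1) = 1 := by simp only [cd, Nat.dist]; omega
      rw [hc'] at h1 h2 h3
      rcases (by omega : ℓ = 1 ∨ 3 ≤ ℓ) with rfl | hℓ3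
      · have hadj : T'.Adj (g 0) (g (2*n+1)) := by
          rw [hg_old _ (by omega), hgy]; exact hTyb.symm
        have hne' : g 0 ≠ g (2*n+1) := by
          rw [hg_old _ (by omega), hgy]; exact hby
        exact ⟨Walk.cons hadj Walk.nil, Walk.IsPath.nil.cons (by simp [hne']), by simp⟩
      · obtain ⟨p, hp1, hp2⟩ := hpp 0 (2*n-1) (ℓ-2) (by omega) (by omega) (by omega)
          (by simp only [cd, Nat.dist]; omega) (by simp only [cd, Nat.dist]; omega)
          (by simp only [cd, Nat.dist]; omega)
        obtain ⟨q, hq1, hq2, hq3⟩ := lift p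
        have hqS : ∀ z ∈ q.support, z ∈ S := by
          rw [hq1]; exact hsupS p hb
        have hxq : x ∉ q.support := fun h => hx (hqS x h)
        have hq1path : (q.concat hTax).IsPath := concat_isPath (hq3 hp1) hTax hxq
        have hyq1 : y ∉ (q.concat hTax).support := by
          rw [Walk.support_concat, List.mem_append]
          rintro (h | h)
          · exact hy (hqS y h)
          · simp only [List.mem_singleton] at h
            exact hxy h.symm
        have hq2path : ((q.concat hTax).concat hTxy).IsPath :=
          concat_isPath hq1path hTxy hyq1
        refine ⟨((q.concat hTax).concat hTxy).copy
          (hg_old _ (by omega)).symm hgy.symm, by simpa using hq2path, ?_⟩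
        simp only [Walk.length_copy, Walk.length_concat, hq2, hp2]
        omega
    · -- general i ≥ 1, path to b then b-y
      obtain ⟨p, hp1, hp2⟩ := hpp i 0 (ℓ-1) (by omega) (by omega) (by omega)
        (by simp only [cd, Nat.dist] at h1 h2 h3 ⊢; omega)
        (by simp only [cd, Nat.dist] at h1 h2 h3 ⊢; omega)
        (by simp only [cd, Nat.dist] at h1 h2 h3 ⊢; omega)
      obtain ⟨q, hq1, hq2, hq3⟩ := lift p
      have hqS : ∀ z ∈ q.support, z ∈ S := by
        rw [hq1]; exact hsupS p (hp.mem i (by omega))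
      have hyq : y ∉ q.support := fun h => hy (hqS y h)
      have hq1path : (q.concat hTyb.symm).IsPath := concat_isPath (hq3 hp1) hTyb.symm hyq
      refine ⟨(q.concat hTyb.symm).copy (hg_old i (by omega)).symm hgy.symm,
        by simpa using hq1path, ?_⟩
      simp only [Walk.length_copy, Walk.length_concat, hq2, hp2]
      have : 1 ≤ ℓ := by simp only [cd, Nat.dist] at h1; omega
      omega

lemma key {T B : SimpleGraph V} {S : Set V} (h : IsTetragonal T B S) :
    ∃ (n : ℕ) (f : ℕ → V), CyclePres B S n f ∧
      (∀ u v : V, T.Adj u v → u ∈ S ∧ v ∈ S) ∧ B ≤ T ∧ PathProp T n f := by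
  induction h with
  | base a b c d hab hac had hbc hbd hcd =>
    set G := fromEdgeSet {s(a, b), s(b, c), s(c, d), s(d, a)} with hG
    set f : ℕ → V := fun i => if i = 0 then a else if i = 1 then b else if i = 2 then c else d
      with hf
    have h0 : f 0 = a := rfl
    have h1 : f 1 = b := rfl
    have h2 : f 2 = c := rfl
    have h3 : f 3 = d := rfl
    have hGadj : ∀ u v : V, G.Adj u v ↔
        (s(u,v) = s(a,b) ∨ s(u,v) = s(b,c) ∨ s(u,v) = s(c,d) ∨ s(u,v) = s(d,a)) ∧ u ≠ v := by
      intro u v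
      rw [hG, fromEdgeSet_adj]
      simp only [Set.mem_insert_iff, Set.mem_singleton_iff]
    have hTS : ∀ u v : V, G.Adj u v → u ∈ ({a,b,c,d} : Set V) ∧ v ∈ ({a,b,c,d} : Set V) := by
      intro u v h
      rw [hGadj] at h
      obtain ⟨hm, -⟩ := h
      rcases hm with h | h | h | h <;> rw [Sym2.eq_iff] at h <;>
        rcases h with ⟨rfl, rfl⟩ | ⟨rfl, rfl⟩ <;>
        simp [Set.mem_insert_iff]
    have hpres : CyclePres G {a,b,c,d} 2 f := by
      constructor
      · exact le_refl 2
      · intro i hi j hj h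
        interval_cases i <;> interval_cases j <;> simp_all [h0, h1, h2, h3]
      · intro i hi
        interval_cases i <;> simp [h0, h1, h2, h3, Set.mem_insert_iff]
      · intro v hv
        simp only [Set.mem_insert_iff, Set.mem_singleton_iff] at hv
        rcases hv with rfl | rfl | rfl | rfl
        exacts [⟨0, by omega, h0⟩, ⟨1, by omega, h1⟩, ⟨2, by omega, h2⟩, ⟨3, by omega, h3⟩]
      · intro u v
        rw [hGadj]
        constructor
        · rintro ⟨hm, hne⟩
          rcases hm with h | h | h | h <;> rw [Sym2.eq_iff] at h <;>
            rcases h with ⟨rfl, rfl⟩ | ⟨rfl, rfl⟩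
          · exact ⟨0, by omega, Or.inl ⟨h0.symm, h1.symm⟩⟩
          · exact ⟨0, by omega, Or.inr ⟨h0.symm, h1.symm⟩⟩
          · exact ⟨1, by omega, Or.inl ⟨h1.symm, h2.symm⟩⟩
          · exact ⟨1, by omega, Or.inr ⟨h1.symm, h2.symm⟩⟩
          · exact ⟨2, by omega, Or.inl ⟨h2.symm, h3.symm⟩⟩
          · exact ⟨2, by omega, Or.inr ⟨h2.symm, h3.symm⟩⟩
          · exact ⟨3, by omega, Or.inl ⟨h3.symm, h0.symm⟩⟩
          · exact ⟨3, by omega, Or.inr ⟨h3.symm, h0.symm⟩⟩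
        · rintro ⟨i, hi, hc⟩
          interval_cases i
          · rcases hc with ⟨e1, e2⟩ | ⟨e1, e2⟩ <;> rw [e1, e2]
            · exact ⟨Or.inl rfl, hab⟩
            · exact ⟨Or.inl (Sym2.eq_swap), fun hh => hab hh.symm⟩
          · rcases hc with ⟨e1, e2⟩ | ⟨e1, e2⟩ <;> rw [e1, e2]
            · exact ⟨Or.inr (Or.inl rfl), hbc⟩
            · exact ⟨Or.inr (Or.inl (Sym2.eq_swap)), fun hh => hbc hh.symm⟩
          · rcases hc with ⟨e1, e2⟩ | ⟨e1, e2⟩ <;> rw [e1, e2]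
            · exact ⟨Or.inr (Or.inr (Or.inl rfl)), hcd⟩
            · exact ⟨Or.inr (Or.inr (Or.inl (Sym2.eq_swap))), fun hh => hcd hh.symm⟩
          · rcases hc with ⟨e1, e2⟩ | ⟨e1, e2⟩ <;> rw [e1, e2]
            · exact ⟨Or.inr (Or.inr (Or.inr rfl)), fun hh => had hh.symm⟩
            · exact ⟨Or.inr (Or.inr (Or.inr (Sym2.eq_swap))), had⟩
    refine ⟨2, f, hpres, hTS, le_rfl, ?_⟩
    intro i j ℓ hi hj hij hl1 hl2 hl3
    have hor : ℓ = cd 2 i j ∨ ℓ = 2*2 - cd 2 i j := by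
      simp only [cd, Nat.dist] at hl1 hl2 hl3 ⊢
      omega
    obtain ⟨w, hw1, hw2⟩ := hpres.extreme hi hj hij hor
    exact ⟨w, hw1, hw2⟩
  | extend T B S a0 b0 x y h hx hy hxy hab ih =>
    obtain ⟨n, f, hp, hTS, hBT, hpp⟩ := ih
    obtain ⟨m, hm, hc⟩ := (hp.adj a0 b0).mp hab
    have hN : 0 < 2*n := hp.Npos
    set r := m + 1 with hrDef
    set f₁ : ℕ → V := fun i => f ((i + r) % (2*n)) with hf₁
    have hp₁ : CyclePres B S n f₁ := hp.rotate r
    have hpp₁ : PathProp T n f₁ := hpp.rotate (by have := hp.hn; omega) r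
    have e_last : f₁ (2*n-1) = f m := by
      show f ((2*n-1 + r) % (2*n)) = f m
      congr 1
      rw [hrDef, show 2*n-1 + (m+1) = 2*n + m by omega, Nat.add_mod_left,
        Nat.mod_eq_of_lt hm]
    have e_first : f₁ 0 = f ((m+1) % (2*n)) := by
      show f ((0 + r) % (2*n)) = f ((m+1) % (2*n))
      rw [Nat.zero_add]
    rcases hc with ⟨ha1, hb1⟩ | ⟨ha1, hb1⟩
    · have ea : a0 = f₁ (2*n-1) := by rw [e_last]; exact ha1
      have eb : b0 = f₁ 0 := by rw [e_first]; exact hb1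
      obtain ⟨g, hg1, hg2, hg3, hg4⟩ := extend_package hp₁ hTS hBT hpp₁ hx hy hxy
      rw [ea, eb]
      exact ⟨n+1, g, hg1, hg2, hg3, hg4⟩
    · have eb : b0 = f₁ (2*n-1) := by rw [e_last]; exact ha1
      have ea : a0 = f₁ 0 := by rw [e_first]; exact hb1
      obtain ⟨g, hg1, hg2, hg3, hg4⟩ := extend_package hp₁ hTS hBT hpp₁ hy hx (Ne.symm hxy)
      have hsetE : ({s(a0, x), s(x, y), s(y, b0)} : Set (Sym2 V)) =
          {s(f₁ (2*n-1), y), s(y, x), s(x, f₁ 0)} := by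
        rw [ea, eb]
        ext e
        simp only [Set.mem_insert_iff, Set.mem_singleton_iff]
        constructor
        · rintro (rfl | rfl | rfl)
          · right; right; rw [Sym2.eq_swap]
          · right; left; rw [Sym2.eq_swap]
          · left; rw [Sym2.eq_swap]
        · rintro (rfl | rfl | rfl)
          · right; right; rw [Sym2.eq_swap]
          · right; left; rw [Sym2.eq_swap]
          · left; rw [Sym2.eq_swap]
      have hsetD : ({s(a0, b0)} : Set (Sym2 V)) = {s(f₁ (2*n-1), f₁ 0)} := by
        rw [ea, eb, Sym2.eq_swap]
      have hsetS : insert x (insert y S) = insert y (insert x S) := Set.insert_comm x y S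
      rw [hsetE, hsetD, hsetS]
      exact ⟨n+1, g, hg1, hg2, hg3, hg4⟩


/-- Proposition 3.5: path lengths in a tetragonal graph. -/
theorem tetragonal_paths {V : Type*} (T B : SimpleGraph V) (S : Set V) (m : ℕ)
    (hT : IsTetragonal T B S) (hcard : S.ncard = 2 * m)
    (u v : V) (hu : u ∈ S) (hv : v ∈ S) (huv : u ≠ v) (d : ℕ) (hd : B.dist u v = d) :
    ∀ ℓ : ℕ, d ≤ ℓ → ℓ ≤ 2 * m - d → ℓ % 2 = d % 2 →
      ∃ p : T.Walk u v, p.IsPath ∧ p.length = ℓ := by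
  intro ℓ h1 h2 h3
  obtain ⟨n, f, hp, hTS, hBT, hpp⟩ := key hT
  have hmn : m = n := by have := hp.ncard_eq; omega
  subst hmn
  obtain ⟨i, hi, hfi⟩ := hp.surj u hu
  obtain ⟨j, hj, hfj⟩ := hp.surj v hv
  subst hfi hfj
  have hij : i ≠ j := fun h => huv (by rw [h])
  have hd2 : d = cd m i j := by rw [← hd, hp.dist_eq hi hj hij]
  exact hpp i j ℓ hi hj hij (hd2 ▸ h1) (hd2 ▸ h2) (hd2 ▸ h3)


end Dean
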